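/- Let P = x^{(h_0)}···x^{(h_ℓ)} with ℓ ≤ h_0 ≤ ... ≤ h_ℓ be a fair monomial and define B(P) = (η^{(h_0−ℓ)} ∧ η^{(h_1−(ℓ−1))} ∧ ... ∧ η^{(h_ℓ)}) ⊗ (ξ^{(ℓ)} ∧ ξ^{(ℓ−1)} ∧ ... ∧ ξ) in the tensor product of two exterior algebras. Then B(P) appears with coefficient (up to sign) ∏ of positive integers, in particular nonzero, in φ(P), where φ is the differential homomorphism with φ(x) = η ⊗ ξ. -/

import Mathlib

set_option maxHeartbeats 1000000
set_option synthInstance.maxHeartbeats 1000000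

section prelim
open Equiv

lemma lemA : ∀ (n : ℕ) (h : Fin n → ℕ), Monotone h → ∀ (π τ : Equiv.Perm (Fin n)),
    (∀ i, h (π i) + (π i : ℕ) = h i + (τ i : ℕ)) → τ = π := by
  intro n
  induction n with
  | zero => intro h _ π τ _; ext i; exact i.elim0
  | succ n IH =>
    intro h hmono π τ heq
    set i₀ := π⁻¹ 0 with hi₀
    have hπi₀ : π i₀ = 0 := Equiv.apply_symm_apply π 0
    have e₀ := heq i₀
    rw [hπi₀] at e₀
    simp only [Fin.val_zero, add_zero] at e₀
    have h0le : h 0 ≤ h i₀ := hmono (Fin.zero_le i₀)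
    have hτi₀ : (τ i₀ : ℕ) = 0 := by omega
    have hhi₀ : h i₀ = h 0 := by omega
    have hτi₀' : τ i₀ = 0 := by ext; simpa using hτi₀
    set s : Equiv.Perm (Fin (n+1)) := Equiv.swap 0 i₀ with hs
    have hhs : ∀ p, h (s p) = h p := by
      intro p
      rcases eq_or_ne p 0 with rfl | h1
      · rw [hs, Equiv.swap_apply_left, hhi₀]
      rcases eq_or_ne p i₀ with rfl | h2
      · rw [hs, Equiv.swap_apply_right, hhi₀]
      · rw [hs, Equiv.swap_apply_of_ne_of_ne h1 h2]
    set π' : Equiv.Perm (Fin (n+1)) := s.trans π with hπ'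
    set τ' : Equiv.Perm (Fin (n+1)) := s.trans τ with hτ'
    have hπ'0 : π' 0 = 0 := by
      simp only [hπ', Equiv.trans_apply, hs, Equiv.swap_apply_left, hπi₀]
    have hτ'0 : τ' 0 = 0 := by
      simp only [hτ', Equiv.trans_apply, hs, Equiv.swap_apply_left, hτi₀']
    have heq' : ∀ p, h (π' p) + (π' p : ℕ) = h p + (τ' p : ℕ) := by
      intro p
      have := heq (s p)
      simpa only [hπ', hτ', Equiv.trans_apply, hhs p] using this
    -- restrict to Fin n
    have restrict : ∀ (σ : Equiv.Perm (Fin (n+1))), σ 0 = 0 →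
        ∃ σ'' : Equiv.Perm (Fin n), ∀ x : Fin n, σ x.succ = (σ'' x).succ := by
      intro σ hσ0
      have hne : ∀ x : Fin n, σ x.succ ≠ 0 := by
        intro x hx
        rw [← hσ0] at hx
        exact (Fin.succ_ne_zero x) (σ.injective hx)
      have hne' : ∀ x : Fin n, σ⁻¹ x.succ ≠ 0 := by
        intro x hx
        apply Fin.succ_ne_zero x
        rw [← hσ0, ← hx]
        exact (Equiv.apply_symm_apply σ x.succ).symm
      refine ⟨⟨fun x => (σ x.succ).pred (hne x), fun x => (σ⁻¹ x.succ).pred (hne' x), ?_, ?_⟩,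
        fun x => (Fin.succ_pred (σ x.succ) (hne x)).symm⟩
      · intro x
        simp [Fin.succ_pred, Fin.pred_succ]
      · intro x
        simp [Fin.succ_pred, Fin.pred_succ]
    obtain ⟨π'', hπ''⟩ := restrict π' hπ'0
    obtain ⟨τ'', hτ''⟩ := restrict τ' hτ'0
    have hmono'' : Monotone (h ∘ Fin.succ) := by
      intro p q hpq
      exact hmono (Fin.succ_le_succ_iff.2 hpq)
    have heq'' : ∀ x : Fin n, (h ∘ Fin.succ) (π'' x) + (π'' x : ℕ)
        = (h ∘ Fin.succ) x + (τ'' x : ℕ) := by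
      intro x
      have := heq' x.succ
      rw [hπ'' x, hτ'' x] at this
      simp only [Function.comp_apply, Fin.val_succ] at this ⊢
      omega
    have : τ'' = π'' := IH (h ∘ Fin.succ) hmono'' π'' τ'' heq''
    have hτ'π' : τ' = π' := by
      ext p
      induction p using Fin.cases with
      | zero => rw [hπ'0, hτ'0]
      | succ x => rw [hπ'' x, hτ'' x, this]
    have : ∀ p, τ p = π p := by
      intro p
      have := congrArg (fun (σ : Equiv.Perm (Fin (n+1))) => σ (s p)) hτ'π'
      simpa only [hτ', hπ', Equiv.trans_apply, hs, Equiv.swap_apply_self] using this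
    exact Equiv.ext this


lemma listProd_sum {R α : Type*} [NonAssocSemiring R] :
    ∀ {n : ℕ} (g : Fin n → Finset α) (t : (i : Fin n) → α → R),
    (List.ofFn fun i => ∑ a ∈ g i, t i a).prod
      = ∑ a ∈ Fintype.piFinset g, (List.ofFn fun i => t i (a i)).prod := by
  intro n
  induction n with
  | zero =>
    intro g t
    simp
  | succ n IH =>
    intro g t
    rw [List.ofFn_succ, List.prod_cons,
      IH (fun i => g i.succ) (fun i a => t i.succ a), Finset.sum_mul_sum]
    rw [← Finset.sum_product']
    refine Finset.sum_bij' (fun p _ => Fin.cons p.1 p.2) (fun a _ => (a 0, Fin.tail a))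
      ?_ ?_ ?_ ?_ ?_
    · rintro ⟨a0, y⟩ hp
      simp only [Finset.mem_product] at hp
      rw [Fin.mem_piFinset_iff_zero_tail]
      simpa [Fin.tail_cons, Fin.tail] using hp
    · intro a ha
      rw [Fin.mem_piFinset_iff_zero_tail] at ha
      simpa [Fin.tail] using ha
    · rintro ⟨a0, y⟩ hp
      simp [Fin.tail_cons]
    · intro a ha
      exact Fin.cons_self_tail a
    · rintro ⟨a0, y⟩ hp
      rw [List.ofFn_succ, List.prod_cons]
      simp [Fin.tail_cons]

lemma listProd_nsmul {R : Type*} [Semiring R] :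
    ∀ {n : ℕ} (c : Fin n → ℕ) (x : Fin n → R),
    (List.ofFn fun i => c i • x i).prod = (∏ i, c i) • (List.ofFn x).prod := by
  intro n
  induction n with
  | zero => intro c x; simp
  | succ n IH =>
    intro c x
    rw [List.ofFn_succ, List.prod_cons, IH (fun i => c i.succ) (fun i => x i.succ),
      List.ofFn_succ, List.prod_cons, Fin.prod_univ_succ, smul_mul_assoc, mul_smul_comm,
      smul_smul, mul_comm (c 0)]

lemma exists_perm_comp {n : ℕ} {α : Type*} (u v : Fin n → α)
    (hu : Function.Injective u) (hv : Function.Injective v)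
    (hr : Set.range u = Set.range v) :
    ∃ σ : Equiv.Perm (Fin n), ∀ i, u i = v (σ i) := by
  refine ⟨(Equiv.ofInjective u hu).trans ((Equiv.setCongr hr).trans
    (Equiv.ofInjective v hv).symm), fun i => ?_⟩
  simp [Equiv.apply_ofInjective_symm hv]


end prelim


open MvPolynomial
open scoped TensorProduct

/-- `Λ = Λ_k(η^{(∞)}) ⊗ Λ_k(ξ^{(∞)})`: the (graded, Koszul-signed) tensor
product of two exterior algebras on countably many generators
`η^{(0)}, η^{(1)}, …` and `ξ^{(0)}, ξ^{(1)}, …`. -/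
abbrev LamTensor (k : Type*) [Field k] :=
  GradedTensorProduct k (fun i : ℕ => ⋀[k]^i (ℕ →₀ k)) (fun i : ℕ => ⋀[k]^i (ℕ →₀ k))

/-- The generator `η^{(i)} ⊗ ξ^{(j)}` of `Λ`. -/
noncomputable def etaXi (k : Type*) [Field k] (i j : ℕ) : LamTensor k :=
  (ExteriorAlgebra.ι k (Finsupp.single i (1 : k))) ᵍ⊗ₜ[k]
    (ExteriorAlgebra.ι k (Finsupp.single j (1 : k)))

/-- The basis monomial `(η^{(s_1)} ∧ … ∧ η^{(s_p)}) ⊗ (ξ^{(t_1)} ∧ … ∧ ξ^{(t_q)})`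
of `Λ` indexed by a pair of finite sets of orders (wedged in increasing order). -/
noncomputable def basisMon (k : Type*) [Field k] (S T : Finset ℕ) : LamTensor k :=
  (((S.sort (· ≤ ·)).map fun i => ExteriorAlgebra.ι k (Finsupp.single i (1 : k))).prod)
    ᵍ⊗ₜ[k]
  (((T.sort (· ≤ ·)).map fun i => ExteriorAlgebra.ι k (Finsupp.single i (1 : k))).prod)

section gradedhelpers
open ExteriorAlgebra
open scoped TensorProduct
variable (k : Type*) [Field k]

/-- the η/ξ generator -/
noncomputable def gen (i : ℕ) : ExteriorAlgebra k (ℕ →₀ k) :=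
  ExteriorAlgebra.ι k (Finsupp.single i (1 : k))

/-- wedge word -/
noncomputable def W {n : ℕ} (v : Fin n → ℕ) : ExteriorAlgebra k (ℕ →₀ k) :=
  (List.ofFn fun i => gen k (v i)).prod

lemma W_eq_iMulti {n : ℕ} (v : Fin n → ℕ) :
    W k v = ExteriorAlgebra.ιMulti k n (fun i => Finsupp.single (v i) (1 : k)) :=
  (ExteriorAlgebra.ιMulti_apply _).symm

lemma W_mem {n : ℕ} (v : Fin n → ℕ) : W k v ∈ ⋀[k]^n (ℕ →₀ k) := by
  rw [W_eq_iMulti]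
  exact ExteriorAlgebra.ιMulti_range k n ⟨_, rfl⟩

lemma gen_mem (i : ℕ) : gen k i ∈ ⋀[k]^1 (ℕ →₀ k) := by
  have := W_mem k (fun _ : Fin 1 => i)
  simpa [W, List.ofFn_succ, gen] using this

lemma gen_tmul_mul {n : ℕ} (i j : ℕ) (A B : ExteriorAlgebra k (ℕ →₀ k))
    (hA : A ∈ ⋀[k]^n (ℕ →₀ k)) :
    ((gen k i ᵍ⊗ₜ[k] gen k j : LamTensor k) * (A ᵍ⊗ₜ[k] B : LamTensor k) : LamTensor k)
      = ((-1 : ℤ)^n) • (((gen k i * A) ᵍ⊗ₜ[k] (gen k j * B) : LamTensor k)) := by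
  have key := GradedTensorProduct.tmul_coe_mul_coe_tmul
    (R := k) (fun m : ℕ => ⋀[k]^m (ℕ →₀ k)) (fun m : ℕ => ⋀[k]^m (ℕ →₀ k))
    (gen k i) (⟨gen k j, gen_mem k j⟩ : ⋀[k]^1 (ℕ →₀ k))
    (⟨A, hA⟩ : ⋀[k]^n (ℕ →₀ k)) B
  simp only [one_mul] at key
  rw [key, Units.smul_def]
  norm_num

lemma W_zero (v : Fin 0 → ℕ) : W k v = 1 := by simp [W]

lemma W_cons {n : ℕ} (v : Fin (n+1) → ℕ) :
    W k v = gen k (v 0) * W k (fun i => v i.succ) := by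
  rw [W, List.ofFn_succ, List.prod_cons]; rfl

lemma one_tmul_one : ((1 : ExteriorAlgebra k (ℕ →₀ k)) ᵍ⊗ₜ[k]
    (1 : ExteriorAlgebra k (ℕ →₀ k)) : LamTensor k) = 1 := by
  rw [GradedTensorProduct.tmul, ← Algebra.TensorProduct.one_def]
  exact GradedTensorProduct.of_one _ _

lemma etaXi_prod : ∀ {n : ℕ} (a b : Fin n → ℕ),
    (List.ofFn fun i => etaXi k (a i) (b i)).prod
      = ((-1 : ℤ)^(n.choose 2)) • ((W k a ᵍ⊗ₜ[k] W k b : LamTensor k)) := by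
  intro n
  induction n with
  | zero =>
    intro a b
    rw [List.ofFn_zero, List.prod_nil, W_zero, W_zero, one_tmul_one]
    norm_num
  | succ n IH =>
    intro a b
    rw [List.ofFn_succ, List.prod_cons,
      IH (fun i => a i.succ) (fun i => b i.succ), mul_smul_comm]
    rw [show etaXi k (a 0) (b 0) = (gen k (a 0) ᵍ⊗ₜ[k] gen k (b 0) : LamTensor k) from rfl]
    rw [gen_tmul_mul k (a 0) (b 0) _ _ (W_mem k _), ← W_cons, ← W_cons, smul_smul,
      ← pow_add]
    congr 2
    rw [Nat.choose_succ_succ, Nat.choose_one_right, add_comm]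

lemma gen_swap (i j : ℕ) : gen k i * gen k j = -(gen k j * gen k i) :=
  eq_neg_of_add_eq_zero_left (ExteriorAlgebra.ι_add_mul_swap _ _)

lemma zsmul_tmul (c : ℤ) (A B : ExteriorAlgebra k (ℕ →₀ k)) :
    ((c • A) ᵍ⊗ₜ[k] B : LamTensor k) = c • (A ᵍ⊗ₜ[k] B : LamTensor k) := by
  rw [GradedTensorProduct.tmul, ← Int.cast_smul_eq_zsmul k, ← TensorProduct.smul_tmul',
    map_smul, Int.cast_smul_eq_zsmul]

lemma tmul_zsmul (c : ℤ) (A B : ExteriorAlgebra k (ℕ →₀ k)) :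
    (A ᵍ⊗ₜ[k] (c • B) : LamTensor k) = c • (A ᵍ⊗ₜ[k] B : LamTensor k) := by
  rw [GradedTensorProduct.tmul, ← Int.cast_smul_eq_zsmul k, TensorProduct.tmul_smul,
    map_smul, Int.cast_smul_eq_zsmul]

lemma neg_tmul' (A B : ExteriorAlgebra k (ℕ →₀ k)) :
    ((-A) ᵍ⊗ₜ[k] B : LamTensor k) = -(A ᵍ⊗ₜ[k] B : LamTensor k) := by
  have := zsmul_tmul k (-1) A B
  simpa using this

lemma tmul_neg' (A B : ExteriorAlgebra k (ℕ →₀ k)) :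
    (A ᵍ⊗ₜ[k] (-B) : LamTensor k) = -(A ᵍ⊗ₜ[k] B : LamTensor k) := by
  have := tmul_zsmul k (-1) A B
  simpa using this

lemma etaXi_commute (i j i' j' : ℕ) : Commute (etaXi k i j) (etaXi k i' j') := by
  unfold Commute SemiconjBy
  rw [show etaXi k i j = (gen k i ᵍ⊗ₜ[k] gen k j : LamTensor k) from rfl,
    show etaXi k i' j' = (gen k i' ᵍ⊗ₜ[k] gen k j' : LamTensor k) from rfl,
    gen_tmul_mul k i j _ _ (gen_mem k i'), gen_tmul_mul k i' j' _ _ (gen_mem k i),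
    gen_swap k i i', gen_swap k j j', neg_tmul', tmul_neg', neg_neg]

lemma W_repeat_zero {n : ℕ} (v : Fin n → ℕ) (i j : Fin n) (hij : i ≠ j) (hv : v i = v j) :
    W k v = 0 := by
  rw [W_eq_iMulti]
  exact AlternatingMap.map_eq_zero_of_eq _ _ (by rw [hv]) hij

lemma W_perm {n : ℕ} (v : Fin n → ℕ) (σ : Equiv.Perm (Fin n)) :
    ∃ ε : ℤ, (ε = 1 ∨ ε = -1) ∧ W k (fun i => v (σ i)) = ε • W k v := by
  refine ⟨(Equiv.Perm.sign σ : ℤ), ?_, ?_⟩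
  · rcases Int.units_eq_one_or (Equiv.Perm.sign σ) with h | h <;> simp [h]
  · rw [W_eq_iMulti, W_eq_iMulti]
    have := AlternatingMap.map_perm (ExteriorAlgebra.ιMulti k n (M := ℕ →₀ k))
      (fun i => Finsupp.single (v i) (1 : k)) σ
    rw [Units.smul_def] at this
    exact this

lemma sort_repr {n : ℕ} (S : Finset ℕ) (hcard : S.card = n) :
    ∃ u : Fin n → ℕ, Function.Injective u ∧ Set.range u = ↑S ∧
      ((S.sort (· ≤ ·)).map fun i => ExteriorAlgebra.ι k (Finsupp.single i (1 : k))).prod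
        = W k u := by
  set l := S.sort (· ≤ ·) with hl
  have hlen : l.length = n := by rw [hl, Finset.length_sort, hcard]
  refine ⟨fun i => l.get (Fin.cast hlen.symm i), ?_, ?_, ?_⟩
  · exact (List.nodup_iff_injective_get.1 (S.sort_nodup _)).comp (Fin.cast_injective _)
  · have hre : (Set.range fun i => l.get (Fin.cast hlen.symm i))
        = Set.range l.get := by
      apply Set.Subset.antisymm
      · rintro x ⟨i, rfl⟩; exact ⟨_, rfl⟩
      · rintro x ⟨i, rfl⟩
        exact ⟨Fin.cast hlen i, rfl⟩
    rw [hre, Set.range_list_get]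
    ext x
    simp [hl, Finset.mem_sort]
  · rw [W]
    congr 1
    apply List.ext_getElem
    · simp [hlen]
    · intro m h1 h2
      simp only [List.getElem_map, List.getElem_ofFn]
      rfl

lemma zero_tmul' (B : ExteriorAlgebra k (ℕ →₀ k)) :
    ((0 : ExteriorAlgebra k (ℕ →₀ k)) ᵍ⊗ₜ[k] B : LamTensor k) = 0 := by
  have := zsmul_tmul k 0 0 B
  simpa using this

lemma tmul_zero' (A : ExteriorAlgebra k (ℕ →₀ k)) :
    (A ᵍ⊗ₜ[k] (0 : ExteriorAlgebra k (ℕ →₀ k)) : LamTensor k) = 0 := by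
  have := tmul_zsmul k 0 A 0
  simpa using this


end gradedhelpers

/-- For a fair monomial `P = x^{(h_0)}⋯x^{(h_ℓ)}` with `ℓ ≤ h_0 ≤ … ≤ h_ℓ`, the
exterior monomial
`B(P) = (η^{(h_0−ℓ)} ∧ η^{(h_1−(ℓ−1))} ∧ … ∧ η^{(h_ℓ)}) ⊗ (ξ^{(ℓ)} ∧ … ∧ ξ' ∧ ξ)`
appears with a nonzero integer coefficient in `φ(P)`, where `φ` is the
differential homomorphism with `φ(x) = η ⊗ ξ`, i.e.
`φ(x^{(j)}) = ∑_{i=0}^{j} C(j,i)·η^{(i)} ⊗ ξ^{(j-i)}`. "Appears" means that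
`φ(P) − c·B(P)` lies in the span of the basis monomials other than `B(P)`. -/
theorem coeff_BP_in_phi_P (k : Type*) [Field k] [CharZero k]
    (φ : MvPolynomial ℕ k →ₐ[k] LamTensor k)
    (hφ : ∀ j : ℕ, φ (X j) =
      ∑ i ∈ Finset.range (j + 1), (Nat.choose j i) • etaXi k i (j - i))
    (ℓ : ℕ) (h : Fin (ℓ + 1) → ℕ) (hmono : Monotone h) (hfair : ℓ ≤ h 0) :
    ∃ c : ℤ, c ≠ 0 ∧
      φ (∏ i, X (h i)) - c •
          ((List.ofFn fun i : Fin (ℓ + 1) =>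
              ExteriorAlgebra.ι k (Finsupp.single (h i - (ℓ - i.val)) (1 : k))).prod
            ᵍ⊗ₜ[k]
           (List.ofFn fun i : Fin (ℓ + 1) =>
              ExteriorAlgebra.ι k (Finsupp.single (ℓ - i.val) (1 : k))).prod)
        ∈ Submodule.span k
            {y : LamTensor k | ∃ S T : Finset ℕ,
              (S, T) ≠ (Finset.image (fun i : Fin (ℓ + 1) => h i - (ℓ - i.val)) Finset.univ,
                        Finset.range (ℓ + 1)) ∧
              y = basisMon k S T} := by
  classical
  have hfair' : ∀ i : Fin (ℓ+1), ℓ ≤ h i := fun i => le_trans hfair (hmono (Fin.zero_le i))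
  set astar : Fin (ℓ+1) → ℕ := fun i => h i - (ℓ - i.val) with hastar
  set bstar : Fin (ℓ+1) → ℕ := fun i => ℓ - i.val with hbstar
  have hasle : ∀ i, astar i ≤ h i := fun i => Nat.sub_le _ _
  have hab : ∀ i, h i - astar i = bstar i := by
    intro i
    have h1 := hfair' i
    have h2 := i.isLt
    simp only [hastar, hbstar]
    omega
  have hainj : Function.Injective astar := by
    have hsm : StrictMono astar := by
      intro i j hij
      have h1 := hfair' i
      have h2 := hmono hij.le
      have h3 : i.val < j.val := hij
      have h4 := j.isLt
      simp only [hastar]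
      omega
    exact hsm.injective
  have hbinj : Function.Injective bstar := by
    intro i j hij
    have h1 := i.isLt
    have h2 := j.isLt
    simp only [hbstar] at hij
    exact Fin.ext (by omega)
  have hrbstar : Set.range bstar = ↑(Finset.range (ℓ+1)) := by
    ext j
    simp only [Set.mem_range, Finset.coe_range, Set.mem_Iio]
    constructor
    · rintro ⟨i, rfl⟩
      have := i.isLt
      simp only [hbstar]
      omega
    · intro hj
      refine ⟨⟨ℓ - j, by omega⟩, ?_⟩
      simp only [hbstar]
      omega
  set P := Fintype.piFinset (fun i : Fin (ℓ+1) => Finset.range (h i + 1)) with hP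
  set G : (Fin (ℓ+1) → ℕ) → LamTensor k :=
    fun a => (List.ofFn fun i => etaXi k (a i) (h i - a i)).prod with hG
  set N : (Fin (ℓ+1) → ℕ) → ℕ := fun a => ∏ i, (h i).choose (a i) with hN
  set Q : (Fin (ℓ+1) → ℕ) → Prop := fun a =>
    Finset.image a Finset.univ = Finset.image astar Finset.univ ∧
    Finset.image (fun i => h i - a i) Finset.univ = Finset.range (ℓ+1) with hQ
  -- Step 1 : expansion
  have expand : φ (∏ i, X (h i)) = ∑ a ∈ P, N a • G a := by
    have h1 : (∏ i, X (h i) : MvPolynomial ℕ k)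
        = (List.ofFn fun i => (X (h i) : MvPolynomial ℕ k)).prod := (List.prod_ofFn (f := fun i : Fin (ℓ+1) => (X (h i) : MvPolynomial ℕ k))).symm
    rw [h1, map_list_prod, List.map_ofFn]
    have h3 : ((⇑φ) ∘ fun i : Fin (ℓ+1) => (X (h i) : MvPolynomial ℕ k))
        = fun i : Fin (ℓ+1) => ∑ a ∈ Finset.range (h i + 1),
            (h i).choose a • etaXi k a (h i - a) := by
      funext i
      exact hφ (h i)
    rw [h3, listProd_sum]
    exact Finset.sum_congr rfl fun a _ => listProd_nsmul _ _
  -- the target basis monomial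
  set B : LamTensor k := (W k astar ᵍ⊗ₜ[k] W k bstar : LamTensor k) with hB
  have habfun : (fun i => etaXi k (astar i) (h i - astar i))
      = fun i => etaXi k (astar i) (bstar i) := by
    funext i
    rw [hab]
  have hGstar : G astar = ((-1:ℤ)^((ℓ+1).choose 2)) • B := by
    simp only [hG]
    rw [habfun, etaXi_prod]
  -- Step 2 : all contributing terms are equal to `G astar`
  have hcontrib : ∀ a ∈ P.filter Q, G a = G astar := by
    intro a ha
    rw [Finset.mem_filter] at ha
    obtain ⟨haP, hQa⟩ := ha
    have hale : ∀ i, a i ≤ h i := by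
      intro i
      have := Fintype.mem_piFinset.mp haP i
      rw [Finset.mem_range] at this
      omega
    have hainj' : Function.Injective a := by
      have hcard : (Finset.image a Finset.univ).card
          = (Finset.univ : Finset (Fin (ℓ+1))).card := by
        rw [hQa.1, Finset.card_image_of_injective Finset.univ hainj]
      have hinjon := Finset.card_image_iff.mp hcard
      intro x y hxy
      exact hinjon (Finset.mem_coe.mpr (Finset.mem_univ x))
        (Finset.mem_coe.mpr (Finset.mem_univ y)) hxy
    have hbinj' : Function.Injective (fun i => h i - a i) := by
      have hcard : (Finset.image (fun i => h i - a i) Finset.univ).card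
          = (Finset.univ : Finset (Fin (ℓ+1))).card := by
        rw [hQa.2, Finset.card_range, Finset.card_univ, Fintype.card_fin]
      have hinjon := Finset.card_image_iff.mp hcard
      intro x y hxy
      exact hinjon (Finset.mem_coe.mpr (Finset.mem_univ x))
        (Finset.mem_coe.mpr (Finset.mem_univ y)) hxy
    have hra : Set.range a = Set.range astar := by
      have e1 : Set.range a = ↑(Finset.image a Finset.univ) := by simp
      have e2 : Set.range astar = ↑(Finset.image astar Finset.univ) := by simp
      rw [e1, e2, hQa.1]
    have hrb : Set.range (fun i => h i - a i) = Set.range bstar := by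
      have e1 : Set.range (fun i => h i - a i)
          = ↑(Finset.image (fun i => h i - a i) Finset.univ) := by simp
      rw [e1, hQa.2, hrbstar]
    obtain ⟨π, hπ⟩ := exists_perm_comp a astar hainj' hainj hra
    obtain ⟨τ, hτ⟩ := exists_perm_comp (fun i => h i - a i) bstar hbinj' hbinj hrb
    have heq : ∀ i, h (π i) + ((π i : Fin (ℓ+1)) : ℕ) = h i + ((τ i : Fin (ℓ+1)) : ℕ) := by
      intro i
      have h1 := hπ i
      have h2 := hτ i
      simp only [hastar] at h1
      simp only [hbstar] at h2
      have h3 := hale i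
      have h4 := hfair' (π i)
      have h5 := (π i).isLt
      have h6 := (τ i).isLt
      omega
    have hτπ : τ = π := lemA (ℓ+1) h hmono π τ heq
    have hF : (fun i => etaXi k (a i) (h i - a i))
        = (fun i => etaXi k (astar i) (bstar i)) ∘ ⇑π := by
      funext i
      simp only [Function.comp_apply]
      rw [hτ i, hτπ, hπ i]
    have hperm : List.Perm (List.ofFn ((fun i => etaXi k (astar i) (bstar i)) ∘ ⇑π))
        (List.ofFn (fun i => etaXi k (astar i) (bstar i))) :=
      π.ofFn_comp_perm _
    have hcomm : (List.ofFn ((fun i => etaXi k (astar i) (bstar i)) ∘ ⇑π)).Pairwise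
        Commute := by
      rw [List.pairwise_ofFn]
      intro i j _
      exact etaXi_commute k _ _ _ _
    simp only [hG]
    rw [hF, hperm.prod_eq' hcomm, habfun]
  -- `astar` is a contributing term
  have hastarP : astar ∈ P := by
    rw [hP, Fintype.mem_piFinset]
    intro i
    rw [Finset.mem_range]
    exact Nat.lt_succ_of_le (hasle i)
  have hQastar : Q astar := by
    constructor
    · rfl
    · have e : (fun i => h i - astar i) = bstar := funext hab
      rw [e]
      apply Finset.ext
      intro j
      rw [Finset.mem_image]
      constructor
      · rintro ⟨i, -, rfl⟩
        rw [Finset.mem_range]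
        have := i.isLt
        simp only [hbstar]
        omega
      · intro hj
        rw [Finset.mem_range] at hj
        refine ⟨⟨ℓ - j, by omega⟩, Finset.mem_univ _, ?_⟩
        simp only [hbstar]
        omega
  have hastarFilter : astar ∈ P.filter Q := Finset.mem_filter.mpr ⟨hastarP, hQastar⟩
  refine ⟨(-1:ℤ)^((ℓ+1).choose 2) * (∑ a ∈ P.filter Q, (N a : ℤ)), ?_, ?_⟩
  · apply mul_ne_zero (pow_ne_zero _ (by norm_num))
    have hpos : (0:ℤ) < ∑ a ∈ P.filter Q, (N a : ℤ) := by
      apply Finset.sum_pos'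
      · intro a _
        positivity
      · refine ⟨astar, hastarFilter, ?_⟩
        have hNpos : 0 < N astar := by
          simp only [hN]
          apply Finset.prod_pos
          intro i _
          exact Nat.choose_pos (hasle i)
        exact_mod_cast hNpos
    omega
  · have hBeq : ((List.ofFn fun i : Fin (ℓ + 1) =>
          ExteriorAlgebra.ι k (Finsupp.single (astar i) (1 : k))).prod
        ᵍ⊗ₜ[k]
        (List.ofFn fun i : Fin (ℓ + 1) =>
          ExteriorAlgebra.ι k (Finsupp.single (bstar i) (1 : k))).prod) = B := rfl
    rw [hBeq, expand,
      ← Finset.sum_filter_add_sum_filter_not P Q (fun a => N a • G a)]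
    have hc : (∑ a ∈ P.filter Q, N a • G a)
        = ((-1:ℤ)^((ℓ+1).choose 2) * (∑ a ∈ P.filter Q, (N a : ℤ))) • B := by
      rw [Finset.sum_congr rfl (fun a ha => by rw [hcontrib a ha] :
        ∀ a ∈ P.filter Q, N a • G a = N a • G astar)]
      rw [← Finset.sum_smul, ← natCast_zsmul, hGstar, smul_smul, Nat.cast_sum]
      ring_nf
    rw [hc, add_sub_cancel_left]
    apply Submodule.sum_mem
    intro a ha
    rw [Finset.mem_filter] at ha
    obtain ⟨haP, hnQ⟩ := ha
    rw [← Nat.cast_smul_eq_nsmul k]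
    apply Submodule.smul_mem
    simp only [hG]
    rw [etaXi_prod k a (fun i => h i - a i), ← Int.cast_smul_eq_zsmul k]
    apply Submodule.smul_mem
    by_cases hia : Function.Injective a
    case neg =>
      obtain ⟨x, y, hxy, hne⟩ := Function.not_injective_iff.mp hia
      rw [W_repeat_zero k a x y hne hxy, zero_tmul']
      exact Submodule.zero_mem _
    by_cases hib : Function.Injective (fun i => h i - a i)
    case neg =>
      obtain ⟨x, y, hxy, hne⟩ := Function.not_injective_iff.mp hib
      rw [W_repeat_zero k (fun i => h i - a i) x y hne hxy, tmul_zero']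
      exact Submodule.zero_mem _
    -- both injective : a non-target basis monomial
    have hScard : (Finset.image a Finset.univ).card = ℓ + 1 := by
      rw [Finset.card_image_of_injective Finset.univ hia, Finset.card_univ, Fintype.card_fin]
    have hTcard : (Finset.image (fun i => h i - a i) Finset.univ).card = ℓ + 1 := by
      rw [Finset.card_image_of_injective Finset.univ hib, Finset.card_univ, Fintype.card_fin]
    obtain ⟨u, huinj, hurange, huprod⟩ := sort_repr k (Finset.image a Finset.univ) hScard
    obtain ⟨w, hwinj, hwrange, hwprod⟩ :=
      sort_repr k (Finset.image (fun i => h i - a i) Finset.univ) hTcard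
    obtain ⟨σ, hσ⟩ := exists_perm_comp a u hia huinj (by rw [hurange]; simp)
    obtain ⟨τ, hτ⟩ := exists_perm_comp (fun i => h i - a i) w hib hwinj
      (by rw [hwrange]; simp)
    obtain ⟨ε, hε1, hεW⟩ := W_perm k u σ
    obtain ⟨ε', hε'1, hε'W⟩ := W_perm k w τ
    have hWa : W k a = ε • W k u := by
      rw [show a = fun i => u (σ i) from funext hσ]
      exact hεW
    have hWb : W k (fun i => h i - a i) = ε' • W k w := by
      rw [show (fun i => h i - a i) = fun i => w (τ i) from funext hτ]
      exact hε'W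
    have hbasis : basisMon k (Finset.image a Finset.univ)
        (Finset.image (fun i => h i - a i) Finset.univ) = (W k u ᵍ⊗ₜ[k] W k w) := by
      rw [basisMon, huprod, hwprod]
    rw [hWa, hWb, zsmul_tmul, tmul_zsmul, ← Int.cast_smul_eq_zsmul k,
      ← Int.cast_smul_eq_zsmul k]
    apply Submodule.smul_mem
    apply Submodule.smul_mem
    apply Submodule.subset_span
    refine ⟨Finset.image a Finset.univ, Finset.image (fun i => h i - a i) Finset.univ,
      ?_, hbasis.symm⟩
    intro hpair
    rw [Prod.mk.injEq] at hpair
    exact hnQ ⟨hpair.1, hpair.2⟩
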